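/- Fast multiplication identity: for B = toep(a) + J toep(Ja) of size n×n diagonalized by DCT-I with first column b, and D_1 = diag(2, 1, ..., 1, 2), one has Bx = √((n−1)/2) · C^T[(C^T b) ∘ (C^T D_1 x)] for all x ∈ ℝⁿ, where ∘ is the entrywise product and C = C_n is the DCT-I matrix, using C = D_1^{-1} C^T D_1 and D_1^{-1}Σ = √((n−1)/2) diag(C^T b) with Σ = C^T B C. -/

import Mathlib

set_option maxHeartbeats 1000000
open Finset Real

section DCTlemmas

lemma per_shift {M : ℕ} (h : ℤ → ℝ) (hper : ∀ z : ℤ, h (z + 2*M) = h z) (t : ℤ) :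
    ∑ s ∈ range (2*M), h (t + s) = ∑ s ∈ range (2*M), h s := by
  induction t using Int.induction_on with
  | zero => simp
  | succ t ih =>
    rw [← ih]
    have h1 : ∑ s ∈ range (2*M), h (t + 1 + s) = ∑ s ∈ range (2*M), h (t + (s+1)) := by
      apply Finset.sum_congr rfl; intro s _; ring_nf
    rw [h1]
    have h2 := Finset.sum_range_succ' (fun s : ℕ => h (t + s)) (2*M)
    have h3 := Finset.sum_range_succ (fun s : ℕ => h (t + s)) (2*M)
    have h4 : h (t + (2*M:ℕ)) = h (t + 0) := by
      push_cast
      rw [add_zero]; rw [← hper t]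
    have : (∑ s ∈ range (2*M), h (t + (s+1))) + h (t+0) = (∑ s ∈ range (2*M), h (t+s)) + h (t + (2*M:ℕ)) := by
      push_cast at h2 h3 ⊢
      rw [← h2, ← h3]
    rw [h4] at this
    linarith
  | pred t ih =>
    rw [← ih]
    have h1 : ∑ s ∈ range (2*M), h (-t + s) = ∑ s ∈ range (2*M), h (-t - 1 + (s+1)) := by
      apply Finset.sum_congr rfl; intro s _; ring_nf
    rw [h1]
    have h2 := Finset.sum_range_succ' (fun s : ℕ => h (-t - 1 + s)) (2*M)
    have h3 := Finset.sum_range_succ (fun s : ℕ => h (-t - 1 + s)) (2*M)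
    have h4 : h (-t - 1 + (2*M:ℕ)) = h (-t - 1 + 0) := by
      push_cast
      rw [add_zero]; rw [← hper (-t-1)]
    have : (∑ s ∈ range (2*M), h (-t-1 + (s+1))) + h (-t-1+0) = (∑ s ∈ range (2*M), h (-t-1+s)) + h (-t-1 + (2*M:ℕ)) := by
      push_cast at h2 h3 ⊢
      rw [← h2, ← h3]
    rw [h4] at this
    linarith

lemma per_reflect {M : ℕ} (hM : 0 < M) (h : ℤ → ℝ) (hper : ∀ z : ℤ, h (z + 2*M) = h z) (t : ℤ) :
    ∑ s ∈ range (2*M), h (t - s) = ∑ s ∈ range (2*M), h s := by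
  have := Finset.sum_range_reflect (fun s : ℕ => h (t - s)) (2*M)
  rw [← this]
  rw [← per_shift h hper (t - 2*M + 1)]
  apply Finset.sum_congr rfl
  intro s hs
  simp only [mem_range] at hs
  congr 1
  have : (2*M - 1 - s : ℕ) = (2*M - 1 - s : ℤ) := by push_cast; omega
  rw [this]; ring


lemma cos_geom_zero (M : ℕ) (hM : 0 < M) (d : ℤ) (hd : ¬ ((2*(M:ℤ)) ∣ d)) :
    ∑ s ∈ range (2*M), Real.cos (π * d * s / M) = 0 := by
  have hM' : (M:ℝ) ≠ 0 := Nat.cast_ne_zero.mpr hM.ne'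
  set θ : ℝ := π * d / M with hθ
  set z : ℂ := Complex.exp ((θ:ℝ) * Complex.I) with hz
  have hz1 : z ≠ 1 := by
    intro h
    have hre : Real.cos θ = 1 := by
      have := congrArg Complex.re h
      rwa [hz, Complex.exp_ofReal_mul_I_re, Complex.one_re] at this
    rw [Real.cos_eq_one_iff] at hre
    obtain ⟨m, hm⟩ := hre
    apply hd
    refine ⟨m, ?_⟩
    have : (d:ℝ) = 2*M*m := by
      rw [hθ] at hm
      field_simp at hm
      nlinarith [Real.pi_ne_zero, Real.pi_pos, hm]
    exact_mod_cast this
  have hgeom : ∑ s ∈ range (2*M), z ^ s = (z ^ (2*M) - 1) / (z - 1) := geom_sum_eq hz1 (2*M)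
  have hz2M : z ^ (2*M) = 1 := by
    rw [hz, ← Complex.exp_nat_mul]
    rw [show ((2*M : ℕ):ℂ) * ((θ:ℝ) * Complex.I) = (d:ℂ) * (2 * π * Complex.I) by
      rw [hθ]; push_cast; have hMc : (M:ℂ) ≠ 0 := Nat.cast_ne_zero.mpr hM.ne'; field_simp]
    exact Complex.exp_int_mul_two_pi_mul_I d
  rw [hz2M] at hgeom
  simp only [sub_self, zero_div] at hgeom
  have hre : ∀ s : ℕ, (z ^ s).re = Real.cos (π * d * s / M) := by
    intro s
    rw [hz, ← Complex.exp_nat_mul]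
    rw [show ((s:ℕ):ℂ) * ((θ:ℝ) * Complex.I) = ((s * θ : ℝ):ℂ) * Complex.I by push_cast; ring]
    rw [Complex.exp_ofReal_mul_I_re]
    congr 1
    rw [hθ]; field_simp
  calc ∑ s ∈ range (2*M), Real.cos (π * d * s / M) = (∑ s ∈ range (2*M), z ^ s).re := by
        rw [Complex.re_sum]
        exact (Finset.sum_congr rfl fun s _ => (hre s).symm)
    _ = 0 := by rw [hgeom]; simp

lemma cos_geom_full (M : ℕ) (hM : 0 < M) (d : ℤ) (hd : (2*(M:ℤ)) ∣ d) :
    ∑ s ∈ range (2*M), Real.cos (π * d * s / M) = 2*M := by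
  obtain ⟨c, hc⟩ := hd
  have hM' : (M:ℝ) ≠ 0 := Nat.cast_ne_zero.mpr hM.ne'
  have h1 : ∀ s ∈ range (2*M), Real.cos (π * d * s / M) = 1 := by
    intro s _
    have e : (π * d * s / M : ℝ) = ((c*(s:ℤ) : ℤ):ℝ) * (2*π) := by
      rw [hc]; push_cast; field_simp
    rw [e, Real.cos_int_mul_two_pi]
  rw [Finset.sum_congr rfl h1]
  simp


lemma odd_per_sum {M : ℕ} (hM : 0 < M) (h : ℤ → ℝ) (hper : ∀ z : ℤ, h (z + 2*M) = h z)
    (hodd : ∀ z : ℤ, h (-z) = - h z) :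
    ∑ s ∈ range (2*M), h s = 0 := by
  have h1 : ∑ s ∈ range (2*M), h (0 - s) = ∑ s ∈ range (2*M), h s := per_reflect hM h hper 0
  have h2 : ∑ s ∈ range (2*M), h (0 - (s:ℤ)) = - ∑ s ∈ range (2*M), h s := by
    rw [← Finset.sum_neg_distrib]
    apply Finset.sum_congr rfl
    intro s _
    rw [show (0 - (s:ℤ)) = -s by ring, hodd]
  linarith

lemma half_double {M : ℕ} (hM : 0 < M) (h : ℤ → ℝ) (hper : ∀ z : ℤ, h (z + 2*M) = h z) (k : ℤ) :
    ∑ m ∈ range (M+1), (if m = 0 ∨ m = M then (1:ℝ) else 2) * (h (k - m) + h (k + m))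
      = 2 * ∑ s ∈ range (2*M), h s := by
  -- split full-period shifted sums
  have split : ∀ g : ℕ → ℝ, ∑ s ∈ range (2*M), g s
      = ∑ m ∈ range (M+1), g m + ∑ m ∈ Finset.Ico 1 M, g (2*M - m) := by
    intro g
    rw [Finset.range_eq_Ico, ← Finset.sum_Ico_consecutive g (by omega : 0 ≤ M+1) (by omega : M+1 ≤ 2*M), ← Finset.range_eq_Ico]
    congr 1
    apply Finset.sum_nbij' (fun s => 2*M - s) (fun m => 2*M - m)
    · intro s hs; simp only [Finset.mem_Ico] at *; omega
    · intro m hm; simp only [Finset.mem_Ico] at *; omega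
    · intro s hs; simp only [Finset.mem_Ico] at hs; omega
    · intro m hm; simp only [Finset.mem_Ico] at hm; omega
    · intro s hs; simp only [Finset.mem_Ico] at hs; congr 1; omega
  have key1 : ∑ s ∈ range (2*M), h (k + s)
      = ∑ m ∈ range (M+1), h (k + m) + ∑ m ∈ Finset.Ico 1 M, h (k - m) := by
    rw [split (fun s => h (k + s))]
    congr 1
    apply Finset.sum_congr rfl
    intro m hm
    simp only [Finset.mem_Ico] at hm
    have : ((2*M - m : ℕ) : ℤ) = 2*M - m := by push_cast; omega
    rw [this, show k + (2*(M:ℤ) - m) = (k - m) + 2*M by ring, hper]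
  have key2 : ∑ s ∈ range (2*M), h (k - s)
      = ∑ m ∈ range (M+1), h (k - m) + ∑ m ∈ Finset.Ico 1 M, h (k + m) := by
    rw [split (fun s => h (k - s))]
    congr 1
    apply Finset.sum_congr rfl
    intro m hm
    simp only [Finset.mem_Ico] at hm
    have : ((2*M - m : ℕ) : ℤ) = 2*M - m := by push_cast; omega
    have h6 := hper (k + m - 2*M)
    rw [show k + (m:ℤ) - 2*M + 2*M = k + m by ring] at h6
    rw [this, show k - (2*(M:ℤ) - m) = k + m - 2*M by ring, h6]
  -- now combine
  have lhs_split : ∑ m ∈ range (M+1), (if m = 0 ∨ m = M then (1:ℝ) else 2) * (h (k - m) + h (k + m))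
      = ∑ m ∈ range (M+1), (h (k - m) + h (k + m)) + ∑ m ∈ Finset.Ico 1 M, (h (k - m) + h (k + m)) := by
    have e1 : ∀ m ∈ range (M+1), (if m = 0 ∨ m = M then (1:ℝ) else 2) * (h (k - m) + h (k + m))
        = (h (k - m) + h (k + m)) + (if m = 0 ∨ m = M then (0:ℝ) else 1) * (h (k - m) + h (k + m)) := by
      intro m _; by_cases hm : m = 0 ∨ m = M <;> simp [hm] <;> ring
    rw [Finset.sum_congr rfl e1, Finset.sum_add_distrib]
    congr 1
    have e2 : ∀ x ∈ range (M+1), (if x = 0 ∨ x = M then (0:ℝ) else 1) * (h (k - x) + h (k + x))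
        = if x ∈ Finset.Ico 1 M then (h (k - x) + h (k + x)) else 0 := by
      intro x hx
      simp only [Finset.mem_range] at hx
      by_cases h0 : x = 0 ∨ x = M
      · have : x ∉ Finset.Ico 1 M := by simp only [Finset.mem_Ico]; omega
        simp [h0, this]
      · have : x ∈ Finset.Ico 1 M := by simp only [Finset.mem_Ico]; omega
        simp [h0, this]
    rw [Finset.sum_congr rfl e2, Finset.sum_ite_mem]
    congr 1
    ext x
    simp only [Finset.mem_inter, Finset.mem_range, Finset.mem_Ico]
    omega
  rw [lhs_split]
  have e3 : ∑ m ∈ range (M+1), (h (k - m) + h (k + m))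
      = ∑ m ∈ range (M+1), h (k - m) + ∑ m ∈ range (M+1), h (k + m) := Finset.sum_add_distrib
  have e4 : ∑ m ∈ Finset.Ico 1 M, (h (k - m) + h (k + m))
      = ∑ m ∈ Finset.Ico 1 M, h (k - m) + ∑ m ∈ Finset.Ico 1 M, h (k + m) := Finset.sum_add_distrib
  have p1 := per_shift h hper k
  have p2 := per_reflect hM h hper k
  linarith [key1, key2]

lemma half_eq_full {M : ℕ} (hM : 0 < M) (g : ℤ → ℝ) (hper : ∀ z : ℤ, g (z + 2*M) = g z)
    (heven : ∀ z : ℤ, g (-z) = g z) :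
    ∑ m ∈ range (M+1), (if m = 0 ∨ m = M then (1:ℝ) else 2) * g m = ∑ s ∈ range (2*M), g s := by
  have := half_double hM g hper 0
  have e : ∀ m ∈ range (M+1), (if m = 0 ∨ m = M then (1:ℝ) else 2) * (g (0 - m) + g (0 + m))
      = 2 * ((if m = 0 ∨ m = M then (1:ℝ) else 2) * g m) := by
    intro m _
    rw [show (0 - (m:ℤ)) = -m by ring, heven, zero_add]
    ring
  rw [Finset.sum_congr rfl e, ← Finset.mul_sum] at this
  linarith

lemma orth (M : ℕ) (hM : 0 < M) (k l : ℕ) (hk : k ≤ M) (hl : l ≤ M) :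
    ∑ j ∈ range (M+1), (if j = 0 ∨ j = M then (1:ℝ) else 2) *
        (Real.cos (π * j * k / M) * Real.cos (π * j * l / M))
      = if k = l then (if k = 0 ∨ k = M then (2*M:ℝ) else M) else 0 := by
  have hM' : (M:ℝ) ≠ 0 := Nat.cast_ne_zero.mpr hM.ne'
  set g : ℤ → ℝ := fun z => Real.cos (π * z * k / M) * Real.cos (π * z * l / M) with hg
  have hper : ∀ z : ℤ, g (z + 2*M) = g z := by
    intro z
    simp only [hg]
    push_cast
    congr 1
    · rw [show (π * ((z:ℝ) + 2*M) * k / M) = π * z * k / M + ((k:ℤ):ℝ) * (2*π) by field_simp; push_cast; ring]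
      exact Real.cos_add_int_mul_two_pi _ k
    · rw [show (π * ((z:ℝ) + 2*M) * l / M) = π * z * l / M + ((l:ℤ):ℝ) * (2*π) by field_simp; push_cast; ring]
      exact Real.cos_add_int_mul_two_pi _ l
  have heven : ∀ z : ℤ, g (-z) = g z := by
    intro z
    simp only [hg]
    push_cast
    rw [show (π * -(z:ℝ) * k / M) = -(π * z * k / M) by ring,
        show (π * -(z:ℝ) * l / M) = -(π * z * l / M) by ring, Real.cos_neg, Real.cos_neg]
  have step1 : ∑ j ∈ range (M+1), (if j = 0 ∨ j = M then (1:ℝ) else 2) *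
      (Real.cos (π * j * k / M) * Real.cos (π * j * l / M)) = ∑ s ∈ range (2*M), g s := by
    rw [← half_eq_full hM g hper heven]
    apply Finset.sum_congr rfl
    intro j _
    simp only [hg]
    norm_num
  rw [step1]
  have keyid : ∀ x y : ℝ, Real.cos x * Real.cos y
      = 1/2 * (Real.cos (x - y) + Real.cos (x + y)) := by
    intro x y; rw [Real.cos_sub, Real.cos_add]; ring
  have step2 : ∑ s ∈ range (2*M), g s
      = (1/2) * ((∑ s ∈ range (2*M), Real.cos (π * (((k:ℤ) - l : ℤ):ℝ) * s / M))
               + (∑ s ∈ range (2*M), Real.cos (π * (((k:ℤ) + l : ℤ):ℝ) * s / M))) := by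
    rw [← Finset.sum_add_distrib, Finset.mul_sum]
    apply Finset.sum_congr rfl
    intro s _
    simp only [hg]
    rw [keyid]
    congr 2
    · congr 1; push_cast; field_simp
    · congr 1; push_cast; field_simp
  rw [step2]
  by_cases hkl : k = l
  · subst hkl
    have v1 : ∑ s ∈ range (2*M), Real.cos (π * (((k:ℤ) - k : ℤ):ℝ) * s / M) = 2*M :=
      cos_geom_full M hM _ ⟨0, by ring⟩
    by_cases hke : k = 0 ∨ k = M
    · have hdvd : (2*(M:ℤ)) ∣ ((k:ℤ) + k) := by
        rcases hke with h|h
        · subst h; exact ⟨0, by simp⟩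
        · subst h; exact ⟨1, by push_cast; ring⟩
      have v2 : ∑ s ∈ range (2*M), Real.cos (π * (((k:ℤ) + k : ℤ):ℝ) * s / M) = 2*M :=
        cos_geom_full M hM _ hdvd
      rw [v1, v2, if_pos rfl, if_pos hke]
      ring
    · have hdvd : ¬ (2*(M:ℤ)) ∣ ((k:ℤ) + k) := by
        intro hdvd
        have h0 := Int.eq_zero_of_abs_lt_dvd hdvd (by rw [abs_lt]; constructor <;> omega)
        omega
      have v2 : ∑ s ∈ range (2*M), Real.cos (π * (((k:ℤ) + k : ℤ):ℝ) * s / M) = 0 :=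
        cos_geom_zero M hM _ hdvd
      rw [v1, v2, if_pos rfl, if_neg hke]
      ring
  · have v1 : ∑ s ∈ range (2*M), Real.cos (π * (((k:ℤ) - l : ℤ):ℝ) * s / M) = 0 := by
      apply cos_geom_zero M hM
      intro hdvd
      have h0 := Int.eq_zero_of_abs_lt_dvd hdvd (by rw [abs_lt]; constructor <;> omega)
      omega
    have v2 : ∑ s ∈ range (2*M), Real.cos (π * (((k:ℤ) + l : ℤ):ℝ) * s / M) = 0 := by
      apply cos_geom_zero M hM
      intro hdvd
      have h0 := Int.eq_zero_of_abs_lt_dvd hdvd (by rw [abs_lt]; constructor <;> omega)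
      omega
    rw [v1, v2, if_neg hkl]
    ring

lemma eig (M : ℕ) (hM : 0 < M) (f : ℤ → ℝ) (hper : ∀ z : ℤ, f (z + 2*M) = f z)
    (heven : ∀ z : ℤ, f (-z) = f z) (j k : ℕ) (hk : k ≤ M) :
    ∑ m ∈ range (M+1), (if m = 0 ∨ m = M then (1:ℝ) else 2) *
        ((f ((k:ℤ) - m) + f ((k:ℤ) + m)) * Real.cos (π * j * m / M))
      = (∑ p ∈ range (M+1), (if p = 0 ∨ p = M then (1:ℝ) else 2) *
          ((2 * f (p:ℤ)) * Real.cos (π * j * p / M))) * Real.cos (π * j * k / M) := by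
  have hM' : (M:ℝ) ≠ 0 := Nat.cast_ne_zero.mpr hM.ne'
  set h : ℤ → ℝ := fun z => f z * Real.cos (π * j * ((k:ℝ) - (z:ℝ)) / M) with hh
  have hhper : ∀ z : ℤ, h (z + 2*M) = h z := by
    intro z
    simp only [hh]
    rw [hper]
    congr 1
    rw [← Real.cos_add_int_mul_two_pi (π * (j:ℝ) * ((k:ℝ) - ((z:ℤ):ℝ)) / M) (-(j:ℤ))]
    congr 1
    push_cast
    field_simp
    ring
  have step1 : ∀ m ∈ range (M+1), (if m = 0 ∨ m = M then (1:ℝ) else 2) *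
      ((f ((k:ℤ) - m) + f ((k:ℤ) + m)) * Real.cos (π * j * m / M))
      = (if m = 0 ∨ m = M then (1:ℝ) else 2) * (h ((k:ℤ) - m) + h ((k:ℤ) + m)) := by
    intro m _
    simp only [hh]
    have e1 : Real.cos (π * j * ((k:ℝ) - (((k:ℤ) - m : ℤ):ℝ)) / M) = Real.cos (π * j * m / M) := by
      congr 1; push_cast; ring
    have e2 : Real.cos (π * j * ((k:ℝ) - (((k:ℤ) + m : ℤ):ℝ)) / M) = Real.cos (π * j * m / M) := by
      rw [← Real.cos_neg (π * j * ((k:ℝ) - (((k:ℤ) + m : ℤ):ℝ)) / M)]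
      congr 1; push_cast; ring
    rw [e1, e2]
    ring
  rw [Finset.sum_congr rfl step1, half_double hM h hhper ((k:ℤ))]
  have oddzero : ∑ s ∈ range (2*M), f ((s:ℕ):ℤ) * Real.sin (π * j * (((s:ℕ):ℤ):ℝ) / M) = 0 := by
    have h0 := odd_per_sum hM (fun z : ℤ => f z * Real.sin (π * j * ((z:ℤ):ℝ) / M)) ?_ ?_
    · exact h0
    · intro z
      show f (z + 2*(M:ℤ)) * Real.sin (π * j * (((z + 2*(M:ℤ)):ℤ):ℝ) / M)
          = f z * Real.sin (π * j * ((z:ℤ):ℝ) / M)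
      rw [hper]
      congr 1
      rw [← Real.sin_add_int_mul_two_pi (π * (j:ℝ) * ((z:ℤ):ℝ) / M) ((j:ℤ))]
      congr 1
      push_cast
      field_simp
    · intro z
      show f (-z) * Real.sin (π * j * (((-z):ℤ):ℝ) / M) = -(f z * Real.sin (π * j * ((z:ℤ):ℝ) / M))
      rw [heven]
      rw [show (π * (j:ℝ) * (((-z):ℤ):ℝ) / M) = -(π * j * ((z:ℤ):ℝ) / M) by push_cast; ring,
        Real.sin_neg]
      ring
  have evenfull : ∑ p ∈ range (M+1), (if p = 0 ∨ p = M then (1:ℝ) else 2) *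
      ((2 * f (p:ℤ)) * Real.cos (π * j * p / M))
      = 2 * ∑ s ∈ range (2*M), f ((s:ℕ):ℤ) * Real.cos (π * j * (((s:ℕ):ℤ):ℝ) / M) := by
    have h0 := half_eq_full hM (fun z : ℤ => f z * Real.cos (π * j * ((z:ℤ):ℝ) / M)) ?_ ?_
    · rw [← h0, Finset.mul_sum]
      apply Finset.sum_congr rfl
      intro p _
      show (if p = 0 ∨ p = M then (1:ℝ) else 2) * ((2 * f (p:ℤ)) * Real.cos (π * j * p / M))
          = 2 * ((if p = 0 ∨ p = M then (1:ℝ) else 2) * (f ((p:ℕ):ℤ) * Real.cos (π * j * (((p:ℕ):ℤ):ℝ) / M)))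
      push_cast
      ring
    · intro z
      show f (z + 2*(M:ℤ)) * Real.cos (π * j * (((z + 2*(M:ℤ)):ℤ):ℝ) / M)
          = f z * Real.cos (π * j * ((z:ℤ):ℝ) / M)
      rw [hper]
      congr 1
      rw [← Real.cos_add_int_mul_two_pi (π * (j:ℝ) * ((z:ℤ):ℝ) / M) ((j:ℤ))]
      congr 1
      push_cast
      field_simp
    · intro z
      show f (-z) * Real.cos (π * j * (((-z):ℤ):ℝ) / M) = f z * Real.cos (π * j * ((z:ℤ):ℝ) / M)
      rw [heven]
      congr 1
      rw [← Real.cos_neg (π * j * ((z:ℤ):ℝ) / M)]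
      congr 1
      push_cast
      ring
  have step2 : ∑ s ∈ range (2*M), h ((s:ℕ):ℤ)
      = Real.cos (π * j * k / M) * ∑ s ∈ range (2*M), f ((s:ℕ):ℤ) * Real.cos (π * j * (((s:ℕ):ℤ):ℝ) / M)
      + Real.sin (π * j * k / M) * ∑ s ∈ range (2*M), f ((s:ℕ):ℤ) * Real.sin (π * j * (((s:ℕ):ℤ):ℝ) / M) := by
    rw [Finset.mul_sum, Finset.mul_sum, ← Finset.sum_add_distrib]
    apply Finset.sum_congr rfl
    intro s _
    simp only [hh]
    rw [show (π * (j:ℝ) * ((k:ℝ) - (((s:ℕ):ℤ):ℝ)) / M) = π * j * k / M - π * j * (((s:ℕ):ℤ):ℝ) / M by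
      field_simp]
    rw [Real.cos_sub]
    ring
  rw [step2, oddzero, evenfull]
  ring

end DCTlemmas


noncomputable def ffold (a : ℕ → ℝ) (M : ℕ) : ℤ → ℝ := fun z =>
  a (min ((z % (2*(M:ℤ))).toNat) (2*M - (z % (2*(M:ℤ))).toNat))

lemma ffold_per (a : ℕ → ℝ) (M : ℕ) (hM : 0 < M) (z : ℤ) :
    ffold a M (z + 2*M) = ffold a M z := by
  unfold ffold
  have h : (z + 2*(M:ℤ)) % (2*(M:ℤ)) = z % (2*(M:ℤ)) := by
    have := Int.add_mul_emod_self_left (a := z) (b := 2*(M:ℤ)) (c := 1)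
    simpa using this
  rw [h]

lemma ffold_even (a : ℕ → ℝ) (M : ℕ) (hM : 0 < M) (z : ℤ) :
    ffold a M (-z) = ffold a M z := by
  unfold ffold
  have h2M : (0:ℤ) < 2*M := by positivity
  have hr0 : (0:ℤ) ≤ z % (2*(M:ℤ)) := Int.emod_nonneg z (by omega)
  have hr2 : z % (2*(M:ℤ)) < 2*M := Int.emod_lt_of_pos z h2M
  have hneg : (-z) % (2*(M:ℤ)) = (2*(M:ℤ) - z % (2*(M:ℤ))) % (2*(M:ℤ)) := by
    conv_lhs => rw [show -z = -(z % (2*(M:ℤ))) + (2*(M:ℤ))*(-(z / (2*(M:ℤ)))) by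
      rw [Int.emod_def]; ring]
    rw [Int.add_mul_emod_self_left]
    rw [show (2*(M:ℤ) - z % (2*(M:ℤ))) = -(z % (2*(M:ℤ))) + (2*(M:ℤ))*1 by ring]
    rw [Int.add_mul_emod_self_left]
  by_cases h0 : z % (2*(M:ℤ)) = 0
  · rw [hneg, h0, sub_zero, Int.emod_self]
  · have : (-z) % (2*(M:ℤ)) = 2*(M:ℤ) - z % (2*(M:ℤ)) := by
      rw [hneg]
      exact Int.emod_eq_of_lt (by omega) (by omega)
    rw [this]
    congr 1
    omega

lemma ffold_low (a : ℕ → ℝ) (M : ℕ) (hM : 0 < M) (t : ℕ) (ht : t ≤ M) :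
    ffold a M (t:ℤ) = a t := by
  unfold ffold
  have : ((t:ℤ)) % (2*(M:ℤ)) = t := Int.emod_eq_of_lt (by positivity) (by omega)
  rw [this]
  congr 1
  omega

lemma ffold_high (a : ℕ → ℝ) (M : ℕ) (hM : 0 < M) (t : ℕ) (ht1 : M ≤ t) (ht2 : t ≤ 2*M) :
    ffold a M (t:ℤ) = a (2*M - t) := by
  unfold ffold
  by_cases he : t = 2*M
  · subst he
    have h1 : ((2*M:ℕ):ℤ) % (2*(M:ℤ)) = 0 := by
      rw [show ((2*M:ℕ):ℤ) = 2*(M:ℤ) by push_cast; ring, Int.emod_self]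
    rw [h1]
    congr 1
    omega
  · have : ((t:ℕ):ℤ) % (2*(M:ℤ)) = t := Int.emod_eq_of_lt (by positivity) (by omega)
    rw [this]
    congr 1
    omega

open Real Matrix

/-- Fast DCT-I based multiplication for `B = toep(a) + J·toep(Ja)` with first column `b`
and `D₁ = diag(2, 1, …, 1, 2)`:
`Bx = √((n−1)/2) · Cᵀ[(Cᵀb) ∘ (CᵀD₁x)]` for all `x ∈ ℝⁿ`. -/
theorem fast_toeplitz_hankel_multiplication (n : ℕ) (hn : 2 ≤ n) (a : ℕ → ℝ)
    (C T T' J B D1 : Matrix (Fin n) (Fin n) ℝ)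
    (hC : ∀ k l : Fin n, C k l =
      (if (k : ℕ) = 0 ∨ (k : ℕ) = n - 1 then 1 else 2) / Real.sqrt (2 * n - 2) *
        Real.cos (Real.pi * k * l / (n - 1)))
    (hT : ∀ k l : Fin n, T k l = a (((k : ℕ) : ℤ) - ((l : ℕ) : ℤ)).natAbs)
    (hJ : ∀ k l : Fin n, J k l = if (k : ℕ) + (l : ℕ) = n - 1 then 1 else 0)
    (hT' : ∀ k l : Fin n, T' k l = a (n - 1 - (((k : ℕ) : ℤ) - ((l : ℕ) : ℤ)).natAbs))
    (hB : B = T + J * T')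
    (hD1 : D1 = Matrix.diagonal
      (fun k : Fin n => if (k : ℕ) = 0 ∨ (k : ℕ) = n - 1 then 2 else 1))
    (b : Fin n → ℝ) (hb : ∀ k : Fin n, b k = B k ⟨0, by omega⟩)
    (x : Fin n → ℝ) :
    B.mulVec x = Real.sqrt ((n - 1) / 2) •
      Cᵀ.mulVec (fun i => Cᵀ.mulVec b i * Cᵀ.mulVec (D1.mulVec x) i) := by
  obtain ⟨N, rfl⟩ : ∃ N, n = N + 1 := ⟨n - 1, by omega⟩
  have hN : 0 < N := by omega
  set f : ℤ → ℝ := ffold a N with hf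
  have fper : ∀ z : ℤ, f (z + 2*N) = f z := ffold_per a N hN
  have feven : ∀ z : ℤ, f (-z) = f z := ffold_even a N hN
  -- B entries
  have hBent : ∀ k l : Fin (N+1), B k l = f (((k:ℕ):ℤ) - ((l:ℕ):ℤ)) + f (((k:ℕ):ℤ) + ((l:ℕ):ℤ)) := by
    intro k l
    have hk : (k:ℕ) ≤ N := by omega
    have hl : (l:ℕ) ≤ N := by omega
    rw [hB]
    simp only [Matrix.add_apply, Matrix.mul_apply, hT, hJ, hT']
    have hsum : ∑ i : Fin (N+1), (if (k:ℕ) + (i:ℕ) = N + 1 - 1 then (1:ℝ) else 0) *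
        a (N + 1 - 1 - (((i:ℕ):ℤ) - ((l:ℕ):ℤ)).natAbs)
        = a (N - ((((N - (k:ℕ) : ℕ)):ℤ) - ((l:ℕ):ℤ)).natAbs) := by
      rw [Finset.sum_eq_single (⟨N - (k:ℕ), by omega⟩ : Fin (N+1))]
      · rw [if_pos (by show (k:ℕ) + (N - (k:ℕ)) = N + 1 - 1; omega)]
        simp only [Nat.add_sub_cancel]
        ring_nf
      · intro i _ hne
        rw [if_neg, zero_mul]
        simp only [Nat.add_sub_cancel]
        intro hcontra
        apply hne
        apply Fin.ext
        show (i:ℕ) = N - (k:ℕ)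
        omega
      · intro hmem
        exact absurd (Finset.mem_univ _) hmem
    rw [hsum]
    congr 1
    · -- a natAbs(k-l) = f (k - l)
      by_cases hkl : (l:ℕ) ≤ (k:ℕ)
      · rw [show (((k:ℕ):ℤ) - ((l:ℕ):ℤ)).natAbs = (k:ℕ) - (l:ℕ) by omega]
        rw [show (((k:ℕ):ℤ) - ((l:ℕ):ℤ)) = (((k:ℕ) - (l:ℕ) : ℕ) : ℤ) by omega]
        rw [hf, ffold_low a N hN _ (by omega)]
      · rw [show (((k:ℕ):ℤ) - ((l:ℕ):ℤ)).natAbs = (l:ℕ) - (k:ℕ) by omega]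
        rw [show (((k:ℕ):ℤ) - ((l:ℕ):ℤ)) = -((((l:ℕ) - (k:ℕ) : ℕ)) : ℤ) by omega]
        rw [hf, ffold_even a N hN, ffold_low a N hN _ (by omega)]
    · -- hankel part
      by_cases hc : (k:ℕ) + (l:ℕ) ≤ N
      · rw [show ((((N - (k:ℕ) : ℕ)):ℤ) - ((l:ℕ):ℤ)).natAbs = N - (k:ℕ) - (l:ℕ) by omega]
        rw [show N - (N - (k:ℕ) - (l:ℕ)) = (k:ℕ) + (l:ℕ) by omega]
        rw [show (((k:ℕ):ℤ) + ((l:ℕ):ℤ)) = (((k:ℕ) + (l:ℕ) : ℕ) : ℤ) by omega]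
        rw [hf, ffold_low a N hN _ (by omega)]
      · rw [show ((((N - (k:ℕ) : ℕ)):ℤ) - ((l:ℕ):ℤ)).natAbs = (k:ℕ) + (l:ℕ) - N by omega]
        rw [show N - ((k:ℕ) + (l:ℕ) - N) = 2*N - ((k:ℕ) + (l:ℕ)) by omega]
        rw [show (((k:ℕ):ℤ) + ((l:ℕ):ℤ)) = (((k:ℕ) + (l:ℕ) : ℕ) : ℤ) by omega]
        rw [hf, ffold_high a N hN _ (by omega) (by omega)]
  
  -- b in terms of f
  have hb2 : ∀ p : Fin (N+1), b p = 2 * f (((p:ℕ):ℤ)) := by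
    intro p
    rw [hb, hBent]
    show f (((p:ℕ):ℤ) - ((0:ℕ):ℤ)) + f (((p:ℕ):ℤ) + ((0:ℕ):ℤ)) = _
    push_cast
    rw [sub_zero, add_zero]
    ring
  -- abbreviations
  set x' : ℕ → ℝ := fun m => if h : m < N+1 then x ⟨m, h⟩ else 0 with hx'
  set s : ℝ := Real.sqrt (2 * ((N+1:ℕ):ℝ) - 2) with hsdef
  set t : ℝ := Real.sqrt ((((N+1:ℕ):ℝ) - 1)/2) with htdef
  have hNR : (1:ℝ) ≤ (N:ℝ) := by exact_mod_cast hN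
  have hargpos : (0:ℝ) < 2 * ((N+1:ℕ):ℝ) - 2 := by push_cast; linarith
  have hss : s * s = 2*(N:ℝ) := by
    rw [hsdef, Real.mul_self_sqrt hargpos.le]; push_cast; ring
  have hspos : 0 < s := by rw [hsdef]; exact Real.sqrt_pos.mpr hargpos
  have htt : t * t = (N:ℝ)/2 := by
    rw [htdef, Real.mul_self_sqrt (by push_cast; linarith)]; push_cast; ring
  have htpos : 0 < t := by
    rw [htdef]; apply Real.sqrt_pos.mpr; push_cast; linarith
  have hs2t : s = 2*t := by
    rw [hsdef, htdef]
    rw [show (2 * ((N+1:ℕ):ℝ) - 2) = 4 * ((((N+1:ℕ):ℝ) - 1)/2) by ring]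
    rw [Real.sqrt_mul (by norm_num : (0:ℝ) ≤ 4)]
    rw [show (4:ℝ) = 2^2 by norm_num, Real.sqrt_sq (by norm_num : (0:ℝ) ≤ 2)]
  have hconstfinal : t * (2/(s*s*s)) * (2*(N:ℝ)) = 1 := by
    have hs0 : s ≠ 0 := hspos.ne'
    have ht0 : t ≠ 0 := htpos.ne'
    field_simp
    rw [hs2t]
    nlinarith [htt]
  have hcast : ((N+1:ℕ):ℝ) - 1 = (N:ℝ) := by push_cast; ring
  -- pointwise
  funext k
  have hkN : (k:ℕ) ≤ N := by omega
  -- LHS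
  have hLHS : B.mulVec x k = ∑ m ∈ range (N+1),
      (f (((k:ℕ):ℤ) - (m:ℤ)) + f (((k:ℕ):ℤ) + (m:ℤ))) * x' m := by
    calc B.mulVec x k = ∑ i : Fin (N+1), B k i * x i := rfl
      _ = ∑ i : Fin (N+1), (fun m : ℕ => (f (((k:ℕ):ℤ) - (m:ℤ)) + f (((k:ℕ):ℤ) + (m:ℤ))) * x' m) ((i:ℕ)) :=
        Finset.sum_congr rfl (fun i _ => by
          beta_reduce
          rw [hBent]
          congr 1
          simp only [hx']
          rw [dif_pos i.isLt])
      _ = ∑ m ∈ range (N+1), (f (((k:ℕ):ℤ) - (m:ℤ)) + f (((k:ℕ):ℤ) + (m:ℤ))) * x' m :=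
        Fin.sum_univ_eq_sum_range (fun m : ℕ => (f (((k:ℕ):ℤ) - (m:ℤ)) + f (((k:ℕ):ℤ) + (m:ℤ))) * x' m) (N+1)
  -- transpose entries
  have hCt : ∀ i j : Fin (N+1), Cᵀ i j
      = (if (j:ℕ) = 0 ∨ (j:ℕ) = N then (1:ℝ) else 2) / s * Real.cos (π * (j:ℕ) * (i:ℕ) / (N:ℝ)) := by
    intro i j
    rw [Matrix.transpose_apply, hC]
    simp only [Nat.add_sub_cancel]
    rw [hcast]
  -- h1 : C^T b
  have h1 : ∀ j : Fin (N+1), Cᵀ.mulVec b j = (1/s) * ∑ p ∈ range (N+1),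
      (if p = 0 ∨ p = N then (1:ℝ) else 2) * ((2 * f ((p:ℕ):ℤ)) * Real.cos (π * (j:ℕ) * p / (N:ℝ))) := by
    intro j
    calc Cᵀ.mulVec b j = ∑ p : Fin (N+1), Cᵀ j p * b p := rfl
      _ = ∑ p : Fin (N+1), (fun pp : ℕ => (1/s) * ((if pp = 0 ∨ pp = N then (1:ℝ) else 2) *
            ((2 * f ((pp:ℕ):ℤ)) * Real.cos (π * (j:ℕ) * pp / (N:ℝ))))) ((p:ℕ)) :=
        Finset.sum_congr rfl (fun p _ => by
          beta_reduce
          rw [hCt, hb2]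
          have hcos : Real.cos (π * (p:ℕ) * (j:ℕ) / (N:ℝ)) = Real.cos (π * (j:ℕ) * (p:ℕ) / (N:ℝ)) := by
            congr 1; ring
          rw [hcos]
          ring)
      _ = ∑ p ∈ range (N+1), (1/s) * ((if p = 0 ∨ p = N then (1:ℝ) else 2) *
            ((2 * f ((p:ℕ):ℤ)) * Real.cos (π * (j:ℕ) * p / (N:ℝ)))) :=
        Fin.sum_univ_eq_sum_range (fun pp : ℕ => (1/s) * ((if pp = 0 ∨ pp = N then (1:ℝ) else 2) *
            ((2 * f ((pp:ℕ):ℤ)) * Real.cos (π * (j:ℕ) * pp / (N:ℝ))))) (N+1)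
      _ = (1/s) * ∑ p ∈ range (N+1), (if p = 0 ∨ p = N then (1:ℝ) else 2) *
            ((2 * f ((p:ℕ):ℤ)) * Real.cos (π * (j:ℕ) * p / (N:ℝ))) := (Finset.mul_sum _ _ _).symm
  -- h2 : C^T D1 x
  have h2 : ∀ j : Fin (N+1), Cᵀ.mulVec (D1.mulVec x) j = (2/s) * ∑ m ∈ range (N+1),
      Real.cos (π * (j:ℕ) * m / (N:ℝ)) * x' m := by
    intro j
    calc Cᵀ.mulVec (D1.mulVec x) j = ∑ m : Fin (N+1), Cᵀ j m * (D1.mulVec x) m := rfl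
      _ = ∑ m : Fin (N+1), (fun mm : ℕ => (2/s) * (Real.cos (π * (j:ℕ) * mm / (N:ℝ)) * x' mm)) ((m:ℕ)) :=
        Finset.sum_congr rfl (fun m _ => by
          beta_reduce
          rw [hCt, hD1]
          rw [Matrix.mulVec_diagonal]
          have hcos : Real.cos (π * (m:ℕ) * (j:ℕ) / (N:ℝ)) = Real.cos (π * (j:ℕ) * (m:ℕ) / (N:ℝ)) := by
            congr 1; ring
          have hx'm : x' ((m:ℕ)) = x m := by
            simp only [hx']; rw [dif_pos m.isLt]
          rw [hcos, hx'm]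
          simp only [Nat.add_sub_cancel]
          by_cases hm : (m:ℕ) = 0 ∨ (m:ℕ) = N
          · rw [if_pos hm, if_pos hm]; ring
          · rw [if_neg hm, if_neg hm]; ring)
      _ = ∑ m ∈ range (N+1), (2/s) * (Real.cos (π * (j:ℕ) * m / (N:ℝ)) * x' m) :=
        Fin.sum_univ_eq_sum_range (fun mm : ℕ => (2/s) * (Real.cos (π * (j:ℕ) * mm / (N:ℝ)) * x' mm)) (N+1)
      _ = (2/s) * ∑ m ∈ range (N+1), Real.cos (π * (j:ℕ) * m / (N:ℝ)) * x' m := (Finset.mul_sum _ _ _).symm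
  -- core identity
  have h4 : ∑ j ∈ range (N+1), (if j = 0 ∨ j = N then (1:ℝ) else 2) * Real.cos (π * j * (k:ℕ) / (N:ℝ)) *
        ((∑ p ∈ range (N+1), (if p = 0 ∨ p = N then (1:ℝ) else 2) *
            ((2 * f ((p:ℕ):ℤ)) * Real.cos (π * j * p / (N:ℝ)))) *
         (∑ m ∈ range (N+1), Real.cos (π * j * m / (N:ℝ)) * x' m))
      = 2*(N:ℝ) * ∑ m ∈ range (N+1), (f (((k:ℕ):ℤ) - (m:ℤ)) + f (((k:ℕ):ℤ) + (m:ℤ))) * x' m := by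
    have hNR0 : (N:ℝ) ≠ 0 := by positivity
    -- expand Sx and swap sums
    calc ∑ j ∈ range (N+1), (if j = 0 ∨ j = N then (1:ℝ) else 2) * Real.cos (π * j * (k:ℕ) / (N:ℝ)) *
        ((∑ p ∈ range (N+1), (if p = 0 ∨ p = N then (1:ℝ) else 2) *
            ((2 * f ((p:ℕ):ℤ)) * Real.cos (π * j * p / (N:ℝ)))) *
         (∑ m ∈ range (N+1), Real.cos (π * j * m / (N:ℝ)) * x' m))
        = ∑ j ∈ range (N+1), ∑ m ∈ range (N+1),
            ((if j = 0 ∨ j = N then (1:ℝ) else 2) * Real.cos (π * j * (k:ℕ) / (N:ℝ)) *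
             ((∑ p ∈ range (N+1), (if p = 0 ∨ p = N then (1:ℝ) else 2) *
                ((2 * f ((p:ℕ):ℤ)) * Real.cos (π * j * p / (N:ℝ)))) * Real.cos (π * j * m / (N:ℝ)))) * x' m := by
          apply Finset.sum_congr rfl
          intro j _
          rw [Finset.mul_sum, Finset.mul_sum]
          apply Finset.sum_congr rfl
          intro m _
          ring
      _ = ∑ m ∈ range (N+1), ∑ j ∈ range (N+1),
            ((if j = 0 ∨ j = N then (1:ℝ) else 2) * Real.cos (π * j * (k:ℕ) / (N:ℝ)) *
             ((∑ p ∈ range (N+1), (if p = 0 ∨ p = N then (1:ℝ) else 2) *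
                ((2 * f ((p:ℕ):ℤ)) * Real.cos (π * j * p / (N:ℝ)))) * Real.cos (π * j * m / (N:ℝ)))) * x' m :=
          Finset.sum_comm
      _ = ∑ m ∈ range (N+1), (2*(N:ℝ) * (f (((k:ℕ):ℤ) - (m:ℤ)) + f (((k:ℕ):ℤ) + (m:ℤ)))) * x' m := by
          apply Finset.sum_congr rfl
          intro m hm
          have hmN : m ≤ N := by simp only [Finset.mem_range] at hm; omega
          rw [← Finset.sum_mul]
          congr 1
          -- use eig to rewrite SB j * cos(jm)
          calc ∑ j ∈ range (N+1),
              (if j = 0 ∨ j = N then (1:ℝ) else 2) * Real.cos (π * j * (k:ℕ) / (N:ℝ)) *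
              ((∑ p ∈ range (N+1), (if p = 0 ∨ p = N then (1:ℝ) else 2) *
                ((2 * f ((p:ℕ):ℤ)) * Real.cos (π * j * p / (N:ℝ)))) * Real.cos (π * j * m / (N:ℝ)))
              = ∑ j ∈ range (N+1), (if j = 0 ∨ j = N then (1:ℝ) else 2) * Real.cos (π * j * (k:ℕ) / (N:ℝ)) *
                (∑ q ∈ range (N+1), (if q = 0 ∨ q = N then (1:ℝ) else 2) *
                  ((f (((m:ℕ):ℤ) - (q:ℤ)) + f (((m:ℕ):ℤ) + (q:ℤ))) * Real.cos (π * j * q / (N:ℝ)))) := by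
                apply Finset.sum_congr rfl
                intro j _
                rw [eig N hN f fper feven j m hmN]
            _ = ∑ j ∈ range (N+1), ∑ q ∈ range (N+1),
                  ((if q = 0 ∨ q = N then (1:ℝ) else 2) * (f (((m:ℕ):ℤ) - (q:ℤ)) + f (((m:ℕ):ℤ) + (q:ℤ)))) *
                  ((if j = 0 ∨ j = N then (1:ℝ) else 2) *
                    (Real.cos (π * j * (k:ℕ) / (N:ℝ)) * Real.cos (π * j * q / (N:ℝ)))) := by
                apply Finset.sum_congr rfl
                intro j _
                rw [Finset.mul_sum]
                apply Finset.sum_congr rfl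
                intro q _
                ring
            _ = ∑ q ∈ range (N+1), ∑ j ∈ range (N+1),
                  ((if q = 0 ∨ q = N then (1:ℝ) else 2) * (f (((m:ℕ):ℤ) - (q:ℤ)) + f (((m:ℕ):ℤ) + (q:ℤ)))) *
                  ((if j = 0 ∨ j = N then (1:ℝ) else 2) *
                    (Real.cos (π * j * (k:ℕ) / (N:ℝ)) * Real.cos (π * j * q / (N:ℝ)))) := Finset.sum_comm
            _ = ∑ q ∈ range (N+1), ((if q = 0 ∨ q = N then (1:ℝ) else 2) * (f (((m:ℕ):ℤ) - (q:ℤ)) + f (((m:ℕ):ℤ) + (q:ℤ)))) *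
                  (∑ j ∈ range (N+1), (if j = 0 ∨ j = N then (1:ℝ) else 2) *
                    (Real.cos (π * j * (k:ℕ) / (N:ℝ)) * Real.cos (π * j * q / (N:ℝ)))) := by
                apply Finset.sum_congr rfl
                intro q _
                rw [← Finset.mul_sum]
            _ = ∑ q ∈ range (N+1), ((if q = 0 ∨ q = N then (1:ℝ) else 2) * (f (((m:ℕ):ℤ) - (q:ℤ)) + f (((m:ℕ):ℤ) + (q:ℤ)))) *
                  (if (k:ℕ) = q then (if (k:ℕ) = 0 ∨ (k:ℕ) = N then (2*(N:ℝ)) else (N:ℝ)) else 0) := by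
                apply Finset.sum_congr rfl
                intro q hq
                have hqN : q ≤ N := by simp only [Finset.mem_range] at hq; omega
                rw [orth N hN (k:ℕ) q hkN hqN]
            _ = 2*(N:ℝ) * (f (((k:ℕ):ℤ) - (m:ℤ)) + f (((k:ℕ):ℤ) + (m:ℤ))) := by
                rw [Finset.sum_eq_single ((k:ℕ))
                  (fun q _ hqk => by rw [if_neg (show ¬((k:ℕ) = q) from fun hc => hqk hc.symm), mul_zero])
                  (fun hmem => absurd (Finset.mem_range.mpr (by omega)) hmem)]
                rw [if_pos rfl]
                have hfe1 : f (((m:ℕ):ℤ) - ((k:ℕ):ℤ)) = f (((k:ℕ):ℤ) - (m:ℤ)) := by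
                  rw [show (((m:ℕ):ℤ) - ((k:ℕ):ℤ)) = -(((k:ℕ):ℤ) - (m:ℤ)) by ring, feven]
                have hfe2 : f (((m:ℕ):ℤ) + ((k:ℕ):ℤ)) = f (((k:ℕ):ℤ) + (m:ℤ)) := by
                  rw [show (((m:ℕ):ℤ) + ((k:ℕ):ℤ)) = ((k:ℕ):ℤ) + (m:ℤ) by ring]
                rw [hfe1, hfe2]
                by_cases hke : (k:ℕ) = 0 ∨ (k:ℕ) = N
                · rw [if_pos hke, if_pos hke]; ring
                · rw [if_neg hke, if_neg hke]; ring
      _ = 2*(N:ℝ) * ∑ m ∈ range (N+1), (f (((k:ℕ):ℤ) - (m:ℤ)) + f (((k:ℕ):ℤ) + (m:ℤ))) * x' m := by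
          rw [Finset.mul_sum]
          apply Finset.sum_congr rfl
          intro m _
          ring
  -- final computation
  show B.mulVec x k = t * (Cᵀ.mulVec (fun i => Cᵀ.mulVec b i * Cᵀ.mulVec (D1.mulVec x) i)) k
  have hRHS1 : (Cᵀ.mulVec (fun i => Cᵀ.mulVec b i * Cᵀ.mulVec (D1.mulVec x) i)) k
      = (∑ j ∈ range (N+1), (if j = 0 ∨ j = N then (1:ℝ) else 2) * Real.cos (π * j * (k:ℕ) / (N:ℝ)) *
          ((∑ p ∈ range (N+1), (if p = 0 ∨ p = N then (1:ℝ) else 2) *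
              ((2 * f ((p:ℕ):ℤ)) * Real.cos (π * j * p / (N:ℝ)))) *
           (∑ m ∈ range (N+1), Real.cos (π * j * m / (N:ℝ)) * x' m))) * (2/(s*s*s)) := by
    calc (Cᵀ.mulVec (fun i => Cᵀ.mulVec b i * Cᵀ.mulVec (D1.mulVec x) i)) k
        = ∑ j : Fin (N+1), Cᵀ k j * (Cᵀ.mulVec b j * Cᵀ.mulVec (D1.mulVec x) j) := rfl
      _ = ∑ j : Fin (N+1), (fun jj : ℕ => ((if jj = 0 ∨ jj = N then (1:ℝ) else 2) * Real.cos (π * jj * (k:ℕ) / (N:ℝ)) *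
            ((∑ p ∈ range (N+1), (if p = 0 ∨ p = N then (1:ℝ) else 2) *
                ((2 * f ((p:ℕ):ℤ)) * Real.cos (π * jj * p / (N:ℝ)))) *
             (∑ m ∈ range (N+1), Real.cos (π * jj * m / (N:ℝ)) * x' m))) * (2/(s*s*s))) ((j:ℕ)) :=
        Finset.sum_congr rfl (fun j _ => by
          beta_reduce
          rw [hCt, h1, h2]
          ring)
      _ = ∑ j ∈ range (N+1), ((if j = 0 ∨ j = N then (1:ℝ) else 2) * Real.cos (π * j * (k:ℕ) / (N:ℝ)) *
            ((∑ p ∈ range (N+1), (if p = 0 ∨ p = N then (1:ℝ) else 2) *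
                ((2 * f ((p:ℕ):ℤ)) * Real.cos (π * j * p / (N:ℝ)))) *
             (∑ m ∈ range (N+1), Real.cos (π * j * m / (N:ℝ)) * x' m))) * (2/(s*s*s)) :=
        Fin.sum_univ_eq_sum_range (fun jj : ℕ => ((if jj = 0 ∨ jj = N then (1:ℝ) else 2) * Real.cos (π * jj * (k:ℕ) / (N:ℝ)) *
            ((∑ p ∈ range (N+1), (if p = 0 ∨ p = N then (1:ℝ) else 2) *
                ((2 * f ((p:ℕ):ℤ)) * Real.cos (π * jj * p / (N:ℝ)))) *
             (∑ m ∈ range (N+1), Real.cos (π * jj * m / (N:ℝ)) * x' m))) * (2/(s*s*s))) (N+1)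
      _ = _ := (Finset.sum_mul _ _ _).symm
  rw [hRHS1, h4, hLHS]
  set S := ∑ m ∈ range (N+1), (f (((k:ℕ):ℤ) - (m:ℤ)) + f (((k:ℕ):ℤ) + (m:ℤ))) * x' m with hS
  calc S = (t * (2/(s*s*s)) * (2*(N:ℝ))) * S := by rw [hconstfinal]; ring
    _ = t * (2*(N:ℝ) * S * (2/(s*s*s))) := by ring
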